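/- arXiv:1911.09620 — 2 statements merged into one kernel-verified Lean document; each statement's English description precedes it below -/
import Mathlib

section
/- Let φ be a permutation-invariant idempotent linear map on the tensor algebra, and let A, B be elements such that for all n, m ∈ ℕ one has φ(A^{⊗n} ⊗ B^{⊗m}) = φ(A^{⊗n}) ⊗ φ(B^{⊗m}) (A and B are M-unconnected). Then exp_M(A + B) = exp_M(A) ⊗ exp_M(B), where exp_M(X) := ∑_{n≥0} φ(X^{⊗n})/n!. -/
open scoped BigOperators

/-- The generalized `M`-exponential `exp_M(X) := ∑ λ^n φ(X^{⊗n})/n!` as a formal power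
series (working degree-wise with a formal parameter). -/
noncomputable def expM {K V : Type*} [Field K] [AddCommGroup V] [Module K V]
    (φ : TensorAlgebra K V →ₗ[K] TensorAlgebra K V) (A : TensorAlgebra K V) :
    PowerSeries (TensorAlgebra K V) :=
  PowerSeries.mk fun n => (n.factorial : K)⁻¹ • φ (A ^ n)

namespace ExpMAux

def kOf {n : ℕ} (f : Fin n → Bool) : ℕ := (List.ofFn f).count true

lemma kOf_le {n : ℕ} (f : Fin n → Bool) : kOf f ≤ n := by
  simpa [kOf] using (List.count_le_length : (List.ofFn f).count true ≤ _)

lemma kOf_cons {n : ℕ} (b : Bool) (f : Fin n → Bool) :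
    kOf (Fin.cons b f) = kOf f + (if b then 1 else 0) := by
  simp only [kOf, List.ofFn_succ, Fin.cons_zero, Fin.cons_succ, List.count_cons]
  cases b <;> simp

lemma expand {R : Type*} [Ring R] (A B : R) (n : ℕ) :
    (A + B) ^ n = ∑ f : Fin n → Bool, (List.ofFn fun i => if f i then A else B).prod := by
  induction n with
  | zero => simp
  | succ n ih =>
    rw [pow_succ', ih, Finset.mul_sum,
      ← Equiv.sum_comp (Fin.consEquiv fun _ : Fin (n+1) => Bool)
        (fun f : Fin (n+1) → Bool => (List.ofFn fun i => if f i then A else B).prod),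
      Fintype.sum_prod_type, Fintype.sum_bool]
    simp only [Fin.consEquiv_apply, List.ofFn_succ, Fin.cons_zero, Fin.cons_succ,
      List.prod_cons, ite_true, ite_false]
    rw [← Finset.sum_add_distrib]
    refine Finset.sum_congr rfl fun f _ => ?_
    have e2 : (if (false : Bool) = true then A else B) = B := rfl
    rw [e2, add_mul]

lemma perm_word {R : Type*} [Ring R] (A B : R) : ∀ {n : ℕ} (f : Fin n → Bool),
    (List.ofFn fun i => if f i then A else B).Perm
      (List.replicate (kOf f) A ++ List.replicate (n - kOf f) B) := by
  intro n
  induction n with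
  | zero => intro f; simp [kOf]
  | succ n ih =>
    intro f
    have hf : f = Fin.cons (f 0) (fun i => f i.succ) := by
      funext i; refine Fin.cases ?_ ?_ i <;> simp
    have hk := kOf_cons (f 0) (fun i => f i.succ)
    rw [← hf] at hk
    rw [List.ofFn_succ]
    cases hb : f 0 with
    | true =>
      rw [hb] at hk
      have e1 : (if (true : Bool) = true then 1 else 0) = 1 := rfl
      have e2 : (if (true : Bool) = true then A else B) = A := rfl
      rw [e1] at hk
      rw [hk, e2]
      have h2 : n + 1 - ((kOf fun i => f i.succ) + 1) = n - kOf fun i => f i.succ := by omega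
      rw [h2, List.replicate_succ, List.cons_append]
      exact (ih _).cons A
    | false =>
      rw [hb] at hk
      have e1 : (if (false : Bool) = true then 1 else 0) = 0 := rfl
      have e2 : (if (false : Bool) = true then A else B) = B := rfl
      rw [e1, add_zero] at hk
      rw [hk, e2]
      have h1 : n + 1 - (kOf fun i => f i.succ) = (n - kOf fun i => f i.succ) + 1 := by
        have := kOf_le (fun i => f i.succ); omega
      rw [h1, List.replicate_succ]
      exact ((ih _).cons B).trans List.perm_middle.symm

lemma kOf_eq_sum {n : ℕ} (f : Fin n → Bool) :
    kOf f = ∑ i : Fin n, if f i = true then 1 else 0 := by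
  induction n with
  | zero => simp [kOf]
  | succ n ih =>
    have hf : f = Fin.cons (f 0) (fun i => f i.succ) := by
      funext i; refine Fin.cases ?_ ?_ i <;> simp
    have hk := kOf_cons (f 0) (fun i => f i.succ)
    rw [← hf] at hk
    rw [hk, Fin.sum_univ_succ, ih (fun i => f i.succ)]
    cases f 0 <;> simp [add_comm]

lemma card_kOf (n j : ℕ) :
    (Finset.univ.filter fun f : Fin n → Bool => kOf f = j).card = n.choose j := by
  classical
  have h : n.choose j = (Finset.powersetCard j (Finset.univ : Finset (Fin n))).card := by
    rw [Finset.card_powersetCard, Finset.card_univ, Fintype.card_fin]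
  rw [h]
  apply Finset.card_bij (fun f _ => Finset.univ.filter fun x => f x = true)
  · intro f hf
    rw [Finset.mem_powersetCard]
    refine ⟨Finset.filter_subset _ _, ?_⟩
    rw [Finset.mem_filter] at hf
    rw [← hf.2, kOf_eq_sum, Finset.card_filter]
  · intro f hf g hg hfg
    funext x
    have := Finset.ext_iff.mp hfg x
    simp only [Finset.mem_filter, Finset.mem_univ, true_and] at this
    cases hx : f x with
    | true => exact (this.mp hx).symm
    | false =>
      cases hgx : g x with
      | true => exact absurd (this.mpr hgx) (by simp [hx])
      | false => rfl
  · intro s hs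
    rw [Finset.mem_powersetCard] at hs
    refine ⟨fun x => decide (x ∈ s), ?_, ?_⟩
    · rw [Finset.mem_filter]
      refine ⟨Finset.mem_univ _, ?_⟩
      rw [kOf_eq_sum, ← Finset.card_filter, ← hs.2]
      congr 1
      ext x
      simp
    · ext x
      simp

end ExpMAux

/-- if `A` and `B` are `M`-unconnected, i.e.
`φ(A^{⊗n} ⊗ B^{⊗m}) = φ(A^{⊗n}) ⊗ φ(B^{⊗m})` for all `n, m`, then
`exp_M(A+B) = exp_M(A) ⊗ exp_M(B)`. -/
theorem expM_add_of_unconnected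
    {K V : Type*} [Field K] [CharZero K] [AddCommGroup V] [Module K V]
    (φ : TensorAlgebra K V →ₗ[K] TensorAlgebra K V)
    (hidem : φ ∘ₗ φ = φ)
    (hperm : ∀ l l' : List (TensorAlgebra K V), l.Perm l' → φ l.prod = φ l'.prod)
    (A B : TensorAlgebra K V)
    (hunconn : ∀ n m : ℕ, φ (A ^ n * B ^ m) = φ (A ^ n) * φ (B ^ m)) :
    expM φ (A + B) = expM φ A * expM φ B := by
  classical
  refine PowerSeries.ext fun n => ?_
  rw [PowerSeries.coeff_mul]
  simp only [expM, PowerSeries.coeff_mk]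
  -- φ of a word equals the sorted product
  have hword : ∀ (m : ℕ) (f : Fin m → Bool),
      φ ((List.ofFn fun i => if f i then A else B).prod)
        = φ (A ^ ExpMAux.kOf f) * φ (B ^ (m - ExpMAux.kOf f)) := by
    intro m f
    rw [hperm _ _ (ExpMAux.perm_word A B f), List.prod_append, List.prod_replicate,
      List.prod_replicate, hunconn]
  -- key binomial identity for φ
  have hkey : φ ((A + B) ^ n)
      = ∑ j ∈ Finset.range (n+1), (n.choose j) • (φ (A ^ j) * φ (B ^ (n - j))) := by
    rw [ExpMAux.expand, map_sum]
    rw [← Finset.sum_fiberwise_of_maps_to (g := ExpMAux.kOf) (t := Finset.range (n+1))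
      (fun f _ => Finset.mem_range.mpr (Nat.lt_succ_of_le (ExpMAux.kOf_le f)))
      (fun f => φ ((List.ofFn fun i => if f i then A else B).prod))]
    refine Finset.sum_congr rfl fun j hj => ?_
    have : ∀ f ∈ Finset.univ.filter (fun f : Fin n → Bool => ExpMAux.kOf f = j),
        φ ((List.ofFn fun i => if f i then A else B).prod) = φ (A ^ j) * φ (B ^ (n - j)) := by
      intro f hf
      rw [Finset.mem_filter] at hf
      rw [hword, hf.2]
    rw [Finset.sum_congr rfl this, Finset.sum_const, ExpMAux.card_kOf]
  rw [hkey, Finset.smul_sum, Finset.Nat.sum_antidiagonal_eq_sum_range_succ_mk]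
  refine Finset.sum_congr rfl fun j hj => ?_
  have hjn : j ≤ n := Nat.lt_succ_iff.mp (Finset.mem_range.mp hj)
  rw [← Nat.cast_smul_eq_nsmul K (n.choose j), smul_smul, smul_mul_assoc, mul_smul_comm,
    smul_smul]
  congr 1
  have hcf : ((n.choose j : K)) * (j.factorial : K) * ((n - j).factorial : K)
      = (n.factorial : K) := by
    exact_mod_cast congrArg (Nat.cast : ℕ → K) (Nat.choose_mul_factorial_mul_factorial hjn)
  have h1 : (j.factorial : K) ≠ 0 := Nat.cast_ne_zero.mpr j.factorial_ne_zero
  have h2 : ((n - j).factorial : K) ≠ 0 := Nat.cast_ne_zero.mpr (n - j).factorial_ne_zero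
  have h3 : (n.factorial : K) ≠ 0 := Nat.cast_ne_zero.mpr n.factorial_ne_zero
  field_simp
  linear_combination hcf
end

section
/- Conversely, if exp_M(sA + tB) = exp_M(sA) ⊗ exp_M(tB) holds identically in formal scalar parameters s, t, then for all n, m ∈ ℕ one has φ(A^{⊗n} ⊗ B^{⊗m}) = φ(A^{⊗n}) ⊗ φ(B^{⊗m}). -/
open scoped BigOperators
open Finset

private lemma bool_list_perm (l : List Bool) :
    l.Perm (List.replicate (l.count true) true ++ List.replicate (l.count false) false) := by
  induction l with
  | nil => simp
  | cons b l ih =>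
    cases b
    · simpa [List.count_cons, List.replicate_succ] using (ih.cons false).trans List.perm_middle.symm
    · simpa [List.count_cons, List.replicate_succ] using ih.cons true

private lemma count_ofFn_true {k : ℕ} (f : Fin k → Bool) :
    (List.ofFn f).count true = (univ.filter fun i => f i = true).card := by
  induction k with
  | zero => simp
  | succ k ih =>
    rw [List.ofFn_succ, List.count_cons, ih, Finset.card_filter, Finset.card_filter,
      Fin.sum_univ_succ, add_comm]
    cases h : f 0 <;> simp [h]

private lemma pow_add_expand {R : Type*} [Ring R] (x y : R) (k : ℕ) :
    (x + y) ^ k = ∑ f : Fin k → Bool, ((List.ofFn f).map (fun b => if b then x else y)).prod := by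
  induction k with
  | zero => simp
  | succ k ih =>
    have e := Fintype.sum_equiv (Fin.consEquiv fun _ : Fin (k + 1) => Bool)
      (fun p : Bool × (Fin k → Bool) =>
        ((List.ofFn (Fin.cons p.1 p.2 : Fin (k+1) → Bool)).map fun b => if b then x else y).prod)
      (fun f : Fin (k+1) → Bool => ((List.ofFn f).map fun b => if b then x else y).prod)
      (fun p => rfl)
    rw [← e, Fintype.sum_prod_type]
    simp only [List.ofFn_succ, Fin.cons_zero, Fin.cons_succ, List.map_cons, List.prod_cons]
    rw [Fintype.sum_bool]
    simp only [if_true, Bool.false_eq_true, if_false]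
    rw [← Finset.mul_sum, ← Finset.mul_sum, ← ih, ← add_mul, pow_succ']

private lemma card_fiber (k i : ℕ) :
    (((univ : Finset (Fin k → Bool))).filter fun f => (univ.filter fun x => f x = true).card = i).card
      = k.choose i := by
  have h : (((univ : Finset (Fin k → Bool))).filter fun f => (univ.filter fun x => f x = true).card = i).card
      = (Finset.powersetCard i (univ : Finset (Fin k))).card := by
    apply Finset.card_bij (fun f _ => univ.filter fun x => f x = true)
    · intro f hf
      rw [Finset.mem_powersetCard]
      exact ⟨Finset.filter_subset _ _, (Finset.mem_filter.mp hf).2⟩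
    · intro f hf g hg h
      funext x
      have := Finset.ext_iff.mp h x
      simp only [Finset.mem_filter, Finset.mem_univ, true_and] at this
      cases hfx : f x <;> cases hgx : g x <;> simp_all
    · intro S hS
      refine ⟨fun x => decide (x ∈ S), Finset.mem_filter.mpr ⟨Finset.mem_univ _, ?_⟩, ?_⟩
      · have : (univ.filter fun x => decide (x ∈ S) = true) = S := by ext x; simp
        rw [this]
        exact (Finset.mem_powersetCard.mp hS).2
      · ext x; simp
  rw [h, Finset.card_powersetCard, Finset.card_univ, Fintype.card_fin]

private lemma sum_group {M : Type*} [AddCommMonoid M] (k : ℕ) (F : ℕ → M) :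
    (∑ f : Fin k → Bool, F ((univ.filter fun x => f x = true).card)) =
      ∑ i ∈ range (k + 1), k.choose i • F i := by
  have hmap : ∀ f : Fin k → Bool, f ∈ (univ : Finset (Fin k → Bool)) →
      (univ.filter fun x => f x = true).card ∈ range (k + 1) := by
    intro f _
    rw [Finset.mem_range, Nat.lt_succ_iff]
    exact (Finset.card_filter_le _ _).trans (le_of_eq (by simp))
  rw [← Finset.sum_fiberwise_of_maps_to hmap
    (fun f : Fin k → Bool => F ((univ.filter fun x => f x = true).card))]
  refine Finset.sum_congr rfl fun i _ => ?_
  rw [Finset.sum_congr rfl (fun f hf => ?_), Finset.sum_const, card_fiber]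
  rw [(Finset.mem_filter.mp hf).2]

private lemma phi_word_prod {K V : Type*} [Field K] [AddCommGroup V] [Module K V]
    (φ : TensorAlgebra K V →ₗ[K] TensorAlgebra K V)
    (hperm : ∀ l l' : List (TensorAlgebra K V), l.Perm l' → φ l.prod = φ l'.prod)
    (x y : TensorAlgebra K V) {k : ℕ} (f : Fin k → Bool) :
    φ (((List.ofFn f).map fun b => if b then x else y).prod) =
      φ (x ^ ((univ.filter fun i => f i = true).card) *
        y ^ (k - (univ.filter fun i => f i = true).card)) := by
  set l := List.ofFn f with hl
  have hp : (l.map fun b => if b then x else y).Perm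
      ((List.replicate (l.count true) true ++ List.replicate (l.count false) false).map
        fun b => if b then x else y) := (bool_list_perm l).map _
  rw [hperm _ _ hp]
  have hlen : l.count true + l.count false = l.length := by
    simpa using (bool_list_perm l).length_eq.symm
  have hlenk : l.length = k := by rw [hl, List.length_ofFn]
  have hcf : l.count false = k - (univ.filter fun i => f i = true).card := by
    rw [← count_ofFn_true, ← hl]; omega
  have hct : l.count true = (univ.filter fun i => f i = true).card := count_ofFn_true f
  rw [List.map_append, List.map_replicate, List.map_replicate, List.prod_append,
    List.prod_replicate, List.prod_replicate, if_pos rfl,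
    if_neg (by simp : ¬(false = true)), hct, hcf]

private lemma phi_pow_add {K V : Type*} [Field K] [AddCommGroup V] [Module K V]
    (φ : TensorAlgebra K V →ₗ[K] TensorAlgebra K V)
    (hperm : ∀ l l' : List (TensorAlgebra K V), l.Perm l' → φ l.prod = φ l'.prod)
    (x y : TensorAlgebra K V) (k : ℕ) :
    φ ((x + y) ^ k) = ∑ i ∈ range (k + 1), k.choose i • φ (x ^ i * y ^ (k - i)) := by
  rw [pow_add_expand, map_sum,
    Finset.sum_congr rfl fun f _ => phi_word_prod φ hperm x y f]
  exact sum_group k fun i => φ (x ^ i * y ^ (k - i))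

private lemma coeffs_eq_zero {K : Type*} [Field K] [Infinite K] (N : ℕ) (a : ℕ → K)
    (h : ∀ s : K, ∑ i ∈ range N, s ^ i * a i = 0) : ∀ i < N, a i = 0 := by
  intro i hi
  have hp : (∑ j ∈ range N, Polynomial.C (a j) * Polynomial.X ^ j : Polynomial K) = 0 := by
    apply Polynomial.funext
    intro s
    rw [Polynomial.eval_zero, Polynomial.eval_finset_sum]
    simp only [Polynomial.eval_mul, Polynomial.eval_C, Polynomial.eval_pow, Polynomial.eval_X]
    rw [Finset.sum_congr rfl fun j _ => mul_comm (a j) (s ^ j)]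
    exact h s
  have h2 := congrArg (Polynomial.coeff · i) hp
  simp only [Polynomial.finset_sum_coeff, Polynomial.coeff_C_mul, Polynomial.coeff_X_pow,
    Polynomial.coeff_zero, mul_ite, mul_one, mul_zero] at h2
  rwa [Finset.sum_ite_eq (range N) i a, if_pos (Finset.mem_range.mpr hi)] at h2

private lemma vec_coeffs_eq_zero {K M : Type*} [Field K] [Infinite K] [AddCommGroup M]
    [Module K M] (N : ℕ) (v : ℕ → M)
    (h : ∀ s : K, ∑ i ∈ range N, s ^ i • v i = 0) : ∀ i < N, v i = 0 := by
  intro i hi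
  rw [← Module.forall_dual_apply_eq_zero_iff K]
  intro g
  refine coeffs_eq_zero N (fun j => g (v j)) (fun s => ?_) i hi
  have := congrArg g (h s)
  simpa [map_sum, map_smul, smul_eq_mul] using this

/-- conversely, if `exp_M(sA + tB) = exp_M(sA) ⊗ exp_M(tB)` holds
identically in the scalar parameters `s, t` (over the infinite field `K`, so that the
coefficients of `s^n t^m` can be compared), then
`φ(A^{⊗n} ⊗ B^{⊗m}) = φ(A^{⊗n}) ⊗ φ(B^{⊗m})` for all `n, m`. -/
theorem unconnected_of_expM_add
    {K V : Type*} [Field K] [CharZero K] [AddCommGroup V] [Module K V]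
    (φ : TensorAlgebra K V →ₗ[K] TensorAlgebra K V)
    (hidem : φ ∘ₗ φ = φ)
    (hperm : ∀ l l' : List (TensorAlgebra K V), l.Perm l' → φ l.prod = φ l'.prod)
    (A B : TensorAlgebra K V)
    (hfact : ∀ s t : K, expM φ (s • A + t • B) = expM φ (s • A) * expM φ (t • B)) :
    ∀ n m : ℕ, φ (A ^ n * B ^ m) = φ (A ^ n) * φ (B ^ m) := by
  haveI : Infinite K := Infinite.of_injective (Nat.cast : ℕ → K) Nat.cast_injective
  intro n m
  set k := n + m with hk
  set v : ℕ → TensorAlgebra K V := fun i =>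
    ((k.factorial : K)⁻¹ * (k.choose i : K)) • φ (A ^ i * B ^ (k - i)) -
      ((i.factorial : K)⁻¹ * ((k - i).factorial : K)⁻¹) • (φ (A ^ i) * φ (B ^ (k - i))) with hv
  have hzero : ∀ i < k + 1, v i = 0 := by
    refine vec_coeffs_eq_zero (K := K) (k + 1) v fun s => ?_
    have h := congrArg (PowerSeries.coeff (R := TensorAlgebra K V) k) (hfact s 1)
    rw [PowerSeries.coeff_mul] at h
    simp only [expM, PowerSeries.coeff_mk] at h
    rw [one_smul, phi_pow_add φ hperm (s • A) B k] at h
    have hL : (k.factorial : K)⁻¹ • ∑ i ∈ range (k + 1), k.choose i • φ ((s • A) ^ i * B ^ (k - i))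
        = ∑ i ∈ range (k + 1),
            s ^ i • (((k.factorial : K)⁻¹ * (k.choose i : K)) • φ (A ^ i * B ^ (k - i))) := by
      rw [Finset.smul_sum]
      refine Finset.sum_congr rfl fun i _ => ?_
      rw [smul_pow, smul_mul_assoc, map_smul, ← Nat.cast_smul_eq_nsmul K (k.choose i),
        smul_smul, smul_smul, smul_smul]
      congr 1
      ring
    have hR : (∑ p ∈ Finset.HasAntidiagonal.antidiagonal k,
          ((p.1.factorial : K)⁻¹ • φ ((s • A) ^ p.1)) * ((p.2.factorial : K)⁻¹ • φ (B ^ p.2)))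
        = ∑ i ∈ range (k + 1),
            s ^ i • (((i.factorial : K)⁻¹ * ((k - i).factorial : K)⁻¹) •
              (φ (A ^ i) * φ (B ^ (k - i)))) := by
      rw [Finset.Nat.sum_antidiagonal_eq_sum_range_succ_mk]
      refine Finset.sum_congr rfl fun i _ => ?_
      rw [smul_pow, map_smul, smul_smul, smul_mul_assoc, mul_smul_comm, smul_smul, smul_smul]
      congr 1
      ring
    rw [hL, hR] at h
    rw [hv]
    simp only [smul_sub]
    rw [Finset.sum_sub_distrib, h, sub_self]
  have hn := hzero n (by omega)
  rw [hv] at hn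
  simp only [hk] at hn
  rw [Nat.add_sub_cancel_left] at hn
  have hsub := sub_eq_zero.mp hn
  have hcoef : ((n + m).factorial : K)⁻¹ * ((n + m).choose n : K)
      = (n.factorial : K)⁻¹ * (m.factorial : K)⁻¹ := by
    have hc : ((n + m).choose n) * n.factorial * m.factorial = (n + m).factorial := by
      have := Nat.choose_mul_factorial_mul_factorial (Nat.le_add_right n m)
      simpa [Nat.add_sub_cancel_left] using this
    have hcK : (((n + m).choose n : K)) * (n.factorial : K) * (m.factorial : K)
        = ((n + m).factorial : K) := by exact_mod_cast congrArg (Nat.cast : ℕ → K) hc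
    have h1 : (n.factorial : K) ≠ 0 := Nat.cast_ne_zero.mpr n.factorial_ne_zero
    have h2 : (m.factorial : K) ≠ 0 := Nat.cast_ne_zero.mpr m.factorial_ne_zero
    have h3 : ((n + m).factorial : K) ≠ 0 := Nat.cast_ne_zero.mpr (n + m).factorial_ne_zero
    field_simp
    linear_combination hcK
  rw [hcoef] at hsub
  have h1 : (n.factorial : K) ≠ 0 := Nat.cast_ne_zero.mpr n.factorial_ne_zero
  have h2 : (m.factorial : K) ≠ 0 := Nat.cast_ne_zero.mpr m.factorial_ne_zero
  have hc0 : (n.factorial : K)⁻¹ * (m.factorial : K)⁻¹ ≠ 0 :=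
    mul_ne_zero (inv_ne_zero h1) (inv_ne_zero h2)
  exact smul_right_injective (TensorAlgebra K V) hc0 hsub
end
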